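/- Let u : ℝ³ → ℝ be continuously differentiable with compact support, and let q ∈ [2,6] with θ = 3(1/2 − 1/q). Then ‖u‖_{L^q(ℝ³)} ≤ 4^θ · ‖∇u‖_{L²(ℝ³)}^θ · ‖u‖_{L²(ℝ³)}^{1−θ}, where ‖∇u‖_{L²(ℝ³)} is the L² norm of the Euclidean length of the gradient of u. -/

import Mathlib

open Set Function Finset MeasureTheory Measure Filter
open scoped ENNReal NNReal

set_option linter.unnecessarySeqFocus false
set_option linter.deprecated false

theorem grid3 (v : (Fin 3 → ℝ) → ℝ) (hv : ContDiff ℝ 1 v) (h2v : HasCompactSupport v)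
    (F : (Fin 3 → ℝ) → ℝ≥0∞) (hF : Measurable F)
    (hb : ∀ (x : Fin 3 → ℝ) (i : Fin 3) (t : ℝ),
      (‖deriv (v ∘ update x i) t‖₊ : ℝ≥0∞) ≤ F (update x i t)) :
    ∫⁻ x, (‖v x‖₊ : ℝ≥0∞) ^ ((3:ℝ)/2) ≤ (∫⁻ x, F x) ^ ((3:ℝ)/2) := by
  classical
  have hcard : (Fintype.card (Fin 3) : ℝ) = 3 := by simp
  have hp : Real.HolderConjugate (Fintype.card (Fin 3)) ((3:ℝ)/2) := by
    rw [hcard]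
    constructor <;> norm_num
  have hvol : (volume : Measure (Fin 3 → ℝ)) = Measure.pi fun _ => volume := volume_pi
  calc ∫⁻ x, (‖v x‖₊ : ℝ≥0∞) ^ ((3:ℝ)/2)
      = ∫⁻ x, ∏ _i : Fin 3, (‖v x‖₊ : ℝ≥0∞) ^ ((1:ℝ)/2) := by
        congr! 2 with x
        rw [Finset.prod_const, ← ENNReal.rpow_natCast (_ ^ _), ← ENNReal.rpow_mul]
        norm_num
    _ ≤ ∫⁻ x, ∏ i, (∫⁻ t, F (update x i t)) ^ ((1:ℝ)/2) := by
        refine lintegral_mono fun x => ?_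
        refine Finset.prod_le_prod' fun i _ => ?_
        refine ENNReal.rpow_le_rpow ?_ (by norm_num)
        calc (‖v x‖₊ : ℝ≥0∞)
            ≤ ∫⁻ t in Iic (x i), ‖deriv (v ∘ update x i) t‖₊ := by
              refine le_trans (by simp) (HasCompactSupport.enorm_le_lintegral_Ici_deriv ?_ ?_ _)
              · exact hv.comp (by convert contDiff_update 1 x i)
              · exact h2v.comp_isClosedEmbedding (isClosedEmbedding_update x i)
          _ ≤ ∫⁻ t, F (update x i t) := by
              refine le_trans (lintegral_mono fun t => hb x i t) ?_
              exact lintegral_mono' Measure.restrict_le_self le_rfl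
    _ ≤ (∫⁻ x, F x) ^ ((3:ℝ)/2) := by
        have := lintegral_prod_lintegral_pow_le (fun _ : Fin 3 => (volume : Measure ℝ)) hp hF
        rw [hvol]
        convert this using 3
        · rfl
        · rw [hcard]; norm_num

theorem sobolev6 (u : EuclideanSpace ℝ (Fin 3) → ℝ) (hu : ContDiff ℝ 1 u)
    (hsupp : HasCompactSupport u) :
    (∫⁻ x, (‖u x‖₊ : ℝ≥0∞) ^ (6:ℝ)) ^ ((1:ℝ)/6)
      ≤ 4 * (∫⁻ x, (‖fderiv ℝ u x‖₊ : ℝ≥0∞) ^ (2:ℝ)) ^ ((1:ℝ)/2) := by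
  classical
  set A := ∫⁻ x, (‖u x‖₊ : ℝ≥0∞) ^ (6:ℝ) with hA
  set B := ∫⁻ x, (‖fderiv ℝ u x‖₊ : ℝ≥0∞) ^ (2:ℝ) with hB
  have hudiff : Differentiable ℝ u := hu.differentiable one_ne_zero
  set W : EuclideanSpace ℝ (Fin 3) → ℝ := fun x => u x ^ 4 with hWdef
  have hW : ContDiff ℝ 1 W := hu.pow 4
  have h2W : HasCompactSupport W := by
    have : W = (fun t : ℝ => t ^ 4) ∘ u := rfl
    rw [this]
    exact hsupp.comp_left (by simp)
  have hfdW : ∀ x, fderiv ℝ W x = ((4:ℝ) * u x ^ 3) • fderiv ℝ u x := by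
    intro x
    have h1 : HasDerivAt (fun t : ℝ => t ^ 4) ((4:ℕ) * u x ^ (4-1)) (u x) :=
      hasDerivAt_pow 4 (u x)
    have h2 := (h1.comp_hasFDerivAt x (hudiff x).hasFDerivAt)
    have h3 := h2.fderiv
    rw [show W = (fun t : ℝ => t ^ 4) ∘ u from rfl, h3]
    norm_num
  have hnW : ∀ x, (‖fderiv ℝ W x‖₊ : ℝ≥0∞)
      = 4 * (‖u x‖₊ : ℝ≥0∞) ^ (3:ℝ) * (‖fderiv ℝ u x‖₊ : ℝ≥0∞) := by
    intro x
    rw [hfdW x]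
    rw [nnnorm_smul]
    rw [show ((3:ℝ)) = ((3:ℕ):ℝ) by norm_num, ENNReal.rpow_natCast]
    simp [nnnorm_mul, nnnorm_pow, ENNReal.coe_mul, ENNReal.coe_pow, mul_assoc]
  -- transfer to the pi type
  set es : (Fin 3 → ℝ) ≃L[ℝ] EuclideanSpace ℝ (Fin 3) := (EuclideanSpace.equiv (Fin 3) ℝ).symm
    with hes
  set v : (Fin 3 → ℝ) → ℝ := fun y => W (es y) with hvdef
  have hv : ContDiff ℝ 1 v := hW.comp es.contDiff
  have h2v : HasCompactSupport v := h2W.comp_homeomorph es.toHomeomorph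
  have hcontfdW : Continuous (fderiv ℝ W) := hW.continuous_fderiv one_ne_zero
  set F : (Fin 3 → ℝ) → ℝ≥0∞ := fun y => (‖fderiv ℝ W (es y)‖₊ : ℝ≥0∞) with hFdef
  have hF : Measurable F :=
    ((hcontfdW.comp es.continuous).nnnorm).measurable.coe_nnreal_ennreal
  have hfdv : ∀ z, fderiv ℝ v z = (fderiv ℝ W (es z)).comp (es : (Fin 3 → ℝ) →L[ℝ] _) := by
    intro z
    rw [show v = W ∘ es from rfl]
    rw [fderiv_comp z (hW.differentiable one_ne_zero _) es.differentiableAt, es.fderiv]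
  have hb : ∀ (x : Fin 3 → ℝ) (i : Fin 3) (t : ℝ),
      (‖deriv (v ∘ update x i) t‖₊ : ℝ≥0∞) ≤ F (update x i t) := by
    intro x i t
    have hd : deriv (v ∘ update x i) t = fderiv ℝ v (update x i t) (deriv (update x i) t) := by
      rw [fderiv_comp_deriv _ (hv.differentiable one_ne_zero).differentiableAt
        (hasDerivAt_update x i t).differentiableAt]
    rw [hd, deriv_update, hfdv]
    calc (‖(fderiv ℝ W (es (update x i t))).comp (es : (Fin 3 → ℝ) →L[ℝ] _) (Pi.single i 1)‖₊ : ℝ≥0∞)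
        = ‖fderiv ℝ W (es (update x i t)) (es (Pi.single i 1))‖₊ := rfl
      _ ≤ (‖fderiv ℝ W (es (update x i t))‖₊ : ℝ≥0∞) * ‖es (Pi.single i 1)‖₊ := by
          exact_mod_cast ContinuousLinearMap.le_opNNNorm _ _
      _ = F (update x i t) := by
          have h1 : es (Pi.single i 1) = EuclideanSpace.single i (1:ℝ) := rfl
          rw [h1]
          simp [EuclideanSpace.nnnorm_single, hFdef]
  have key := grid3 v hv h2v F hF hb
  have hmp : MeasurePreserving (⇑es) volume volume := PiLp.volume_preserving_toLp (Fin 3)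
  have hWmeas : Measurable W := hW.continuous.measurable
  have hA1 : ∫⁻ y, (‖v y‖₊ : ℝ≥0∞) ^ ((3:ℝ)/2) = ∫⁻ x, (‖W x‖₊ : ℝ≥0∞) ^ ((3:ℝ)/2) :=
    hmp.lintegral_comp (hWmeas.nnnorm.coe_nnreal_ennreal.pow_const _)
  have hA2 : ∫⁻ x, (‖W x‖₊ : ℝ≥0∞) ^ ((3:ℝ)/2) = A := by
    refine lintegral_congr fun x => ?_
    rw [hWdef]
    simp only [nnnorm_pow, ENNReal.coe_pow]
    rw [← ENNReal.rpow_natCast ((‖u x‖₊ : ℝ≥0∞)) 4, ← ENNReal.rpow_mul]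
    norm_num
  have hFint : ∫⁻ y, F y = ∫⁻ x, (‖fderiv ℝ W x‖₊ : ℝ≥0∞) :=
    hmp.lintegral_comp (hcontfdW.nnnorm.measurable.coe_nnreal_ennreal)
  have hmeasu3 : Measurable fun x : EuclideanSpace ℝ (Fin 3) =>
      (‖u x‖₊ : ℝ≥0∞) ^ (3:ℝ) * (‖fderiv ℝ u x‖₊ : ℝ≥0∞) :=
    (hu.continuous.nnnorm.measurable.coe_nnreal_ennreal.pow_const _).mul
      ((hu.continuous_fderiv one_ne_zero).nnnorm.measurable.coe_nnreal_ennreal)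
  have hFint2 : ∫⁻ x, (‖fderiv ℝ W x‖₊ : ℝ≥0∞)
      = 4 * ∫⁻ x, (‖u x‖₊ : ℝ≥0∞) ^ (3:ℝ) * (‖fderiv ℝ u x‖₊ : ℝ≥0∞) := by
    rw [← lintegral_const_mul _ hmeasu3]
    exact lintegral_congr fun x => by rw [hnW x, mul_assoc]
  have hconj : Real.HolderConjugate 2 2 := by constructor <;> norm_num
  have hHolder := ENNReal.lintegral_mul_le_Lp_mul_Lq volume hconj
    (hu.continuous.nnnorm.measurable.coe_nnreal_ennreal.pow_const (3:ℝ)).aemeasurable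
    ((hu.continuous_fderiv one_ne_zero).nnnorm.measurable.coe_nnreal_ennreal).aemeasurable
  have hH2 : ∫⁻ x, (‖u x‖₊ : ℝ≥0∞) ^ (3:ℝ) * (‖fderiv ℝ u x‖₊ : ℝ≥0∞)
      ≤ A ^ ((1:ℝ)/2) * B ^ ((1:ℝ)/2) := by
    refine le_trans (le_of_eq ?_) (le_trans hHolder (le_of_eq ?_))
    · rfl
    · congr 1
      · congr 1
        refine lintegral_congr fun x => ?_
        rw [← ENNReal.rpow_mul]
        norm_num
  have hmain : A ≤ (4 * (A ^ ((1:ℝ)/2) * B ^ ((1:ℝ)/2))) ^ ((3:ℝ)/2) := by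
    calc A = ∫⁻ y, (‖v y‖₊ : ℝ≥0∞) ^ ((3:ℝ)/2) := by rw [hA1, hA2]
      _ ≤ (∫⁻ y, F y) ^ ((3:ℝ)/2) := key
      _ = (4 * ∫⁻ x, (‖u x‖₊ : ℝ≥0∞) ^ (3:ℝ) * (‖fderiv ℝ u x‖₊ : ℝ≥0∞)) ^ ((3:ℝ)/2) := by
          rw [hFint, hFint2]
      _ ≤ (4 * (A ^ ((1:ℝ)/2) * B ^ ((1:ℝ)/2))) ^ ((3:ℝ)/2) := by
          gcongr
  -- finiteness of A
  have hAfin : A ≠ ∞ := by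
    have hcs : HasCompactSupport (fun x : EuclideanSpace ℝ (Fin 3) => ‖u x‖ ^ (6:ℕ)) :=
      hsupp.comp_left (g := fun t : ℝ => ‖t‖ ^ (6:ℕ)) (by simp)
    have hint : Integrable (fun x : EuclideanSpace ℝ (Fin 3) => ‖u x‖ ^ (6:ℕ)) :=
      (hu.continuous.norm.pow 6).integrable_of_hasCompactSupport hcs
    have hfin := hint.hasFiniteIntegral
    rw [HasFiniteIntegral] at hfin
    have : A = ∫⁻ x, (‖(‖u x‖ ^ (6:ℕ))‖₊ : ℝ≥0∞) := by
      refine lintegral_congr fun x => ?_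
      rw [show ((6:ℝ)) = ((6:ℕ):ℝ) by norm_num, ENNReal.rpow_natCast]
      simp [nnnorm_pow]
    rw [this]
    exact hfin.ne
  -- final algebra
  rcases eq_or_ne A 0 with hA0 | hA0
  · rw [hA0, ENNReal.zero_rpow_of_pos (by norm_num)]
    exact zero_le
  have hstep : A ≤ (4:ℝ≥0∞) ^ ((3:ℝ)/2) * A ^ ((3:ℝ)/4) * B ^ ((3:ℝ)/4) := by
    refine le_trans hmain (le_of_eq ?_)
    rw [ENNReal.mul_rpow_of_nonneg _ _ (by norm_num : (0:ℝ) ≤ 3/2),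
      ENNReal.mul_rpow_of_nonneg _ _ (by norm_num : (0:ℝ) ≤ 3/2),
      ← ENNReal.rpow_mul, ← ENNReal.rpow_mul, ← mul_assoc]
    norm_num
  have hquarter : A ^ ((1:ℝ)/4) ≤ (4:ℝ≥0∞) ^ ((3:ℝ)/2) * B ^ ((3:ℝ)/4) := by
    have hcancel : A ^ ((1:ℝ)/4) * A ^ ((3:ℝ)/4) ≤
        ((4:ℝ≥0∞) ^ ((3:ℝ)/2) * B ^ ((3:ℝ)/4)) * A ^ ((3:ℝ)/4) := by
      rw [← ENNReal.rpow_add _ _ hA0 hAfin]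
      norm_num
      calc A ≤ (4:ℝ≥0∞) ^ ((3:ℝ)/2) * A ^ ((3:ℝ)/4) * B ^ ((3:ℝ)/4) := hstep
        _ = (4:ℝ≥0∞) ^ ((3:ℝ)/2) * B ^ ((3:ℝ)/4) * A ^ ((3:ℝ)/4) := by ring
    have h1 : A ^ ((3:ℝ)/4) ≠ 0 := by
      simp [ENNReal.rpow_eq_zero_iff, hA0, hAfin]
    have h2 : A ^ ((3:ℝ)/4) ≠ ∞ := by
      simp [ENNReal.rpow_eq_top_iff, hA0, hAfin]
    exact (ENNReal.mul_le_mul_iff_left h1 h2).mp hcancel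
  have hfinal := ENNReal.rpow_le_rpow hquarter (by norm_num : (0:ℝ) ≤ 2/3)
  rw [← ENNReal.rpow_mul, ENNReal.mul_rpow_of_nonneg _ _ (by norm_num : (0:ℝ) ≤ 2/3),
    ← ENNReal.rpow_mul, ← ENNReal.rpow_mul] at hfinal
  norm_num at hfinal
  exact hfinal


theorem interp3 (u : EuclideanSpace ℝ (Fin 3) → ℝ) (hu : Continuous u)
    (q θ : ℝ) (hq2 : 2 ≤ q) (hq6 : q ≤ 6) (hθ : θ = 3 * (1 / 2 - 1 / q)) :
    (∫⁻ x, (‖u x‖₊ : ℝ≥0∞) ^ q) ^ (1/q)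
      ≤ (∫⁻ x, (‖u x‖₊ : ℝ≥0∞) ^ (2:ℝ)) ^ ((1-θ)/2)
        * (∫⁻ x, (‖u x‖₊ : ℝ≥0∞) ^ (6:ℝ)) ^ (θ/6) := by
  have hq0 : (0:ℝ) < q := by linarith
  rcases eq_or_lt_of_le hq2 with h2 | h2
  · subst h2
    have hθ0 : θ = 0 := by rw [hθ]; norm_num
    rw [hθ0]
    norm_num
  rcases eq_or_lt_of_le hq6 with h6 | h6
  · rw [h6] at hθ ⊢
    have hθ1 : θ = 1 := by rw [hθ]; norm_num
    rw [hθ1]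
    norm_num
  set lam : ℝ := (6 - q)/4 with hlam
  have hlam0 : 0 < lam := by rw [hlam]; linarith
  have hlam1 : lam < 1 := by rw [hlam]; linarith
  have hconj : Real.HolderConjugate (1/lam) (1/(1-lam)) := by
    rw [Real.holderConjugate_iff]
    constructor
    · rw [lt_div_iff₀ hlam0]; linarith
    · rw [one_div, one_div, inv_inv, inv_inv]; ring
  have hmeas : ∀ r : ℝ, AEMeasurable (fun x : EuclideanSpace ℝ (Fin 3) =>
      (‖u x‖₊ : ℝ≥0∞) ^ r) volume :=
    fun r => (hu.nnnorm.measurable.coe_nnreal_ennreal.pow_const r).aemeasurable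
  have hHolder := ENNReal.lintegral_mul_le_Lp_mul_Lq volume hconj
    (hmeas (2*lam)) (hmeas (6*(1-lam)))
  have h1 : ∫⁻ x, (‖u x‖₊ : ℝ≥0∞) ^ q
      = ∫⁻ a, ((fun x => (‖u x‖₊ : ℝ≥0∞) ^ (2*lam)) * fun x => (‖u x‖₊ : ℝ≥0∞) ^ (6*(1-lam))) a := by
    refine lintegral_congr fun x => ?_
    simp only [Pi.mul_apply]
    rw [← ENNReal.rpow_add_of_nonneg _ _ (by nlinarith) (by nlinarith)]
    congr 1
    rw [hlam]; ring
  have h2' : ∫⁻ a, ((‖u a‖₊ : ℝ≥0∞) ^ (2*lam)) ^ (1/lam) = ∫⁻ x, (‖u x‖₊ : ℝ≥0∞) ^ (2:ℝ) := by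
    refine lintegral_congr fun x => ?_
    rw [← ENNReal.rpow_mul]
    congr 1
    field_simp
  have h6' : ∫⁻ a, ((‖u a‖₊ : ℝ≥0∞) ^ (6*(1-lam))) ^ (1/(1-lam))
      = ∫⁻ x, (‖u x‖₊ : ℝ≥0∞) ^ (6:ℝ) := by
    refine lintegral_congr fun x => ?_
    rw [← ENNReal.rpow_mul]
    congr 1
    have : (1:ℝ) - lam ≠ 0 := by linarith
    field_simp
  rw [h2', h6'] at hHolder
  rw [one_div_one_div, one_div_one_div] at hHolder
  rw [h1]
  calc (∫⁻ a, ((fun x => (‖u x‖₊ : ℝ≥0∞) ^ (2*lam)) * fun x => (‖u x‖₊ : ℝ≥0∞) ^ (6*(1-lam))) a) ^ (1/q)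
      ≤ ((∫⁻ x, (‖u x‖₊ : ℝ≥0∞) ^ (2:ℝ)) ^ lam
          * (∫⁻ x, (‖u x‖₊ : ℝ≥0∞) ^ (6:ℝ)) ^ (1-lam)) ^ (1/q) := by
        exact ENNReal.rpow_le_rpow hHolder (by positivity)
    _ = (∫⁻ x, (‖u x‖₊ : ℝ≥0∞) ^ (2:ℝ)) ^ ((1-θ)/2)
        * (∫⁻ x, (‖u x‖₊ : ℝ≥0∞) ^ (6:ℝ)) ^ (θ/6) := by
        rw [ENNReal.mul_rpow_of_nonneg _ _ (by positivity), ← ENNReal.rpow_mul,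
          ← ENNReal.rpow_mul]
        congr 1
        · congr 1
          rw [hθ, hlam]
          field_simp
          ring
        · congr 1
          rw [hθ, hlam]
          field_simp
          ring

theorem conv3 {f : EuclideanSpace ℝ (Fin 3) → ℝ} (hf : Continuous f)
    (h2f : HasCompactSupport f) (h0f : ∀ x, 0 ≤ f x) :
    ∫ x, f x = (∫⁻ x, ENNReal.ofReal (f x)).toReal ∧ (∫⁻ x, ENNReal.ofReal (f x)) ≠ ∞ := by
  have hint : Integrable f volume := hf.integrable_of_hasCompactSupport h2f
  constructor
  · rw [integral_eq_lintegral_of_nonneg_ae (Eventually.of_forall h0f) hf.aestronglyMeasurable]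
  · exact hint.lintegral_lt_top.ne

/-- Gagliardo–Nirenberg–Ladyzhenskaya interpolation inequality in ℝ³:
for `u` continuously differentiable with compact support, `2 ≤ q ≤ 6` and
`θ = 3(1/2 - 1/q)`, one has `‖u‖_{L^q} ≤ 4^θ ‖∇u‖_{L²}^θ ‖u‖_{L²}^{1-θ}`. -/
theorem gagliardo_nirenberg_ladyzhenskaya
    (u : EuclideanSpace ℝ (Fin 3) → ℝ) (hu : ContDiff ℝ 1 u)
    (hsupp : HasCompactSupport u)
    (q θ : ℝ) (hq2 : 2 ≤ q) (hq6 : q ≤ 6) (hθ : θ = 3 * (1 / 2 - 1 / q)) :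
    (∫ x, |u x| ^ q) ^ (1 / q) ≤
      4 ^ θ * ((∫ x, ‖gradient u x‖ ^ 2) ^ ((1 : ℝ) / 2)) ^ θ *
        ((∫ x, (u x) ^ 2) ^ ((1 : ℝ) / 2)) ^ (1 - θ) := by
  have hq0 : (0:ℝ) < q := by linarith
  have hθ0 : 0 ≤ θ := by
    rw [hθ]
    have : 1/q ≤ 1/2 := by
      rw [div_le_div_iff₀ hq0 (by norm_num)]; linarith
    linarith
  have hθ1 : θ ≤ 1 := by
    rw [hθ]
    have : 1/6 ≤ 1/q := by
      rw [div_le_div_iff₀ (by norm_num) hq0]; linarith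
    linarith
  have hcont : Continuous u := hu.continuous
  have hcontfd : Continuous (fderiv ℝ u) := hu.continuous_fderiv one_ne_zero
  -- the three lintegrals
  set Lq := ∫⁻ x, (‖u x‖₊ : ℝ≥0∞) ^ q with hLq
  set L2 := ∫⁻ x, (‖u x‖₊ : ℝ≥0∞) ^ (2:ℝ) with hL2
  set L6 := ∫⁻ x, (‖u x‖₊ : ℝ≥0∞) ^ (6:ℝ) with hL6
  set LB := ∫⁻ x, (‖fderiv ℝ u x‖₊ : ℝ≥0∞) ^ (2:ℝ) with hLB
  -- norm of gradient equals norm of fderiv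
  have hgrad : ∀ x, ‖gradient u x‖ = ‖fderiv ℝ u x‖ := by
    intro x
    rw [gradient]
    exact LinearIsometryEquiv.norm_map _ _
  -- conversions
  have hconvq : (∫ x, |u x| ^ q) = Lq.toReal ∧ Lq ≠ ∞ := by
    have h1 : ∀ x : EuclideanSpace ℝ (Fin 3), ENNReal.ofReal (|u x| ^ q) = (‖u x‖₊ : ℝ≥0∞) ^ q := by
      intro x
      rw [← ENNReal.ofReal_rpow_of_nonneg (abs_nonneg _) hq0.le, ← enorm_eq_nnnorm, Real.enorm_eq_ofReal_abs]
    have hc : Continuous fun x : EuclideanSpace ℝ (Fin 3) => |u x| ^ q :=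
      hcont.abs.rpow_const fun x => Or.inr hq0.le
    have hcs : HasCompactSupport fun x : EuclideanSpace ℝ (Fin 3) => |u x| ^ q := by
      have : (fun x : EuclideanSpace ℝ (Fin 3) => |u x| ^ q) = (fun t : ℝ => |t| ^ q) ∘ u := rfl
      rw [this]
      exact hsupp.comp_left (by simp [Real.zero_rpow hq0.ne'])
    obtain ⟨he, hfin⟩ := conv3 hc hcs (fun x => by positivity)
    simp_rw [h1] at he hfin
    exact ⟨he, hfin⟩
  have hconv2 : (∫ x, (u x) ^ 2) = L2.toReal ∧ L2 ≠ ∞ := by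
    have h1 : ∀ x : EuclideanSpace ℝ (Fin 3), ENNReal.ofReal ((u x) ^ 2) = (‖u x‖₊ : ℝ≥0∞) ^ (2:ℝ) := by
      intro x
      rw [show ((2:ℝ)) = ((2:ℕ):ℝ) by norm_num, ENNReal.rpow_natCast,
        ← enorm_eq_nnnorm, Real.enorm_eq_ofReal_abs, ← ENNReal.ofReal_pow (abs_nonneg _), sq_abs]
    have hc : Continuous fun x : EuclideanSpace ℝ (Fin 3) => (u x) ^ 2 := hcont.pow 2
    have hcs : HasCompactSupport fun x : EuclideanSpace ℝ (Fin 3) => (u x) ^ 2 :=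
      hsupp.comp_left (g := fun t : ℝ => t ^ 2) (by simp)
    obtain ⟨he, hfin⟩ := conv3 hc hcs (fun x => sq_nonneg _)
    simp_rw [h1] at he hfin
    exact ⟨he, hfin⟩
  have hconvB : (∫ x, ‖gradient u x‖ ^ 2) = LB.toReal ∧ LB ≠ ∞ := by
    have h1 : ∀ x : EuclideanSpace ℝ (Fin 3),
        ENNReal.ofReal (‖gradient u x‖ ^ 2) = (‖fderiv ℝ u x‖₊ : ℝ≥0∞) ^ (2:ℝ) := by
      intro x
      rw [hgrad x, show ((2:ℝ)) = ((2:ℕ):ℝ) by norm_num, ENNReal.rpow_natCast,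
        ← enorm_eq_nnnorm, ← ofReal_norm, ← ENNReal.ofReal_pow (norm_nonneg _)]
    have hc : Continuous fun x : EuclideanSpace ℝ (Fin 3) => ‖gradient u x‖ ^ 2 := by
      have : (fun x : EuclideanSpace ℝ (Fin 3) => ‖gradient u x‖ ^ 2)
          = fun x => ‖fderiv ℝ u x‖ ^ 2 := funext fun x => by rw [hgrad x]
      rw [this]
      exact (hcontfd.norm).pow 2
    have hcs : HasCompactSupport fun x : EuclideanSpace ℝ (Fin 3) => ‖gradient u x‖ ^ 2 := by
      have : (fun x : EuclideanSpace ℝ (Fin 3) => ‖gradient u x‖ ^ 2)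
          = fun x => ‖fderiv ℝ u x‖ ^ 2 := funext fun x => by rw [hgrad x]
      rw [this]
      have h2 : HasCompactSupport (fderiv ℝ u) := hsupp.fderiv ℝ
      exact h2.comp_left (g := fun L => ‖L‖ ^ 2) (by simp)
    obtain ⟨he, hfin⟩ := conv3 hc hcs (fun x => sq_nonneg _)
    simp_rw [h1] at he hfin
    exact ⟨he, hfin⟩
  -- the ENNReal-valued inequality
  have hsob := sobolev6 u hu hsupp
  have hinterp := interp3 u hcont q θ hq2 hq6 hθ
  have hkey : Lq ^ (1/q) ≤ (4:ℝ≥0∞) ^ θ * (LB ^ ((1:ℝ)/2)) ^ θ * (L2 ^ ((1:ℝ)/2)) ^ (1-θ) := by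
    calc Lq ^ (1/q) ≤ L2 ^ ((1-θ)/2) * L6 ^ (θ/6) := hinterp
      _ ≤ L2 ^ ((1-θ)/2) * ((4:ℝ≥0∞) * LB ^ ((1:ℝ)/2)) ^ θ := by
          gcongr
          calc L6 ^ (θ/6) = (L6 ^ ((1:ℝ)/6)) ^ θ := by
                rw [← ENNReal.rpow_mul]; congr 1; ring
            _ ≤ ((4:ℝ≥0∞) * LB ^ ((1:ℝ)/2)) ^ θ := ENNReal.rpow_le_rpow hsob hθ0
      _ = (4:ℝ≥0∞) ^ θ * (LB ^ ((1:ℝ)/2)) ^ θ * (L2 ^ ((1:ℝ)/2)) ^ (1-θ) := by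
          rw [ENNReal.mul_rpow_of_nonneg _ _ hθ0, ← ENNReal.rpow_mul, ← ENNReal.rpow_mul]
          rw [show (1:ℝ)/2 * (1-θ) = (1-θ)/2 by ring, show (1:ℝ)/2 * θ = θ/2 by ring,
            show ((1:ℝ)-θ)/2 = (1-θ)/2 from rfl]
          ring
  -- convert to real
  rw [hconvq.1, hconv2.1, hconvB.1]
  have hRHSne : (4:ℝ≥0∞) ^ θ * (LB ^ ((1:ℝ)/2)) ^ θ * (L2 ^ ((1:ℝ)/2)) ^ (1-θ) ≠ ∞ := by
    apply ENNReal.mul_ne_top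
    apply ENNReal.mul_ne_top
    · exact ENNReal.rpow_ne_top_of_nonneg hθ0 (by norm_num)
    · exact ENNReal.rpow_ne_top_of_nonneg hθ0
        (ENNReal.rpow_ne_top_of_nonneg (by norm_num) hconvB.2)
    · exact ENNReal.rpow_ne_top_of_nonneg (by linarith)
        (ENNReal.rpow_ne_top_of_nonneg (by norm_num) hconv2.2)
  have := ENNReal.toReal_mono hRHSne hkey
  rw [← ENNReal.toReal_rpow] at this
  rw [ENNReal.toReal_mul, ENNReal.toReal_mul, ← ENNReal.toReal_rpow, ← ENNReal.toReal_rpow,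
    ← ENNReal.toReal_rpow, ← ENNReal.toReal_rpow, ← ENNReal.toReal_rpow] at this
  convert this using 3
  norm_num
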